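/- The group Aut(G₂) does not act transitively on G₂; that is, there exist points z, w ∈ G₂ such that no holomorphic automorphism F of G₂ satisfies F(z) = w. In particular, the symmetrized bidisc is an inhomogeneous domain. -/

import Mathlib

open Set

noncomputable section

/-- The symmetrization map `π(λ₁,λ₂) = (λ₁+λ₂, λ₁λ₂)`. -/
def symPi (l₁ l₂ : ℂ) : ℂ × ℂ := (l₁ + l₂, l₁ * l₂)

/-- The open unit disc `E ⊂ ℂ`. -/
def unitDisc : Set ℂ := {z : ℂ | ‖z‖ < 1}

/-- The symmetrized bidisc `G₂ = π(E × E)`. -/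
def G2 : Set (ℂ × ℂ) := {w | ∃ l₁ ∈ unitDisc, ∃ l₂ ∈ unitDisc, symPi l₁ l₂ = w}

/-- The royal variety `Σ₂ = {(2λ, λ²) : λ ∈ E}`. -/
def Sigma2 : Set (ℂ × ℂ) := {w | ∃ l ∈ unitDisc, (2 * l, l ^ 2) = w}

/-- `F` is a holomorphic automorphism of the domain `D ⊆ V`: it is holomorphic on `D`,
maps `D` into `D`, and has a holomorphic two-sided inverse on `D`. -/
def IsAutomorphismOf {V : Type} [NormedAddCommGroup V] [NormedSpace ℂ V]
    (D : Set V) (F : V → V) : Prop :=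
  DifferentiableOn ℂ F D ∧ Set.MapsTo F D D ∧
    ∃ G : V → V, DifferentiableOn ℂ G D ∧ Set.MapsTo G D D ∧ Set.InvOn G F D D

namespace Complex

/-- Compatibility: the complex absolute value as an `AbsoluteValue`, i.e. the norm. -/
noncomputable def abs : AbsoluteValue ℂ ℝ := IsAbsoluteValue.toAbsoluteValue (norm : ℂ → ℝ)

@[simp] lemma abs_eq_norm' (z : ℂ) : Complex.abs z = ‖z‖ := rfl

lemma abs_apply (z : ℂ) : Complex.abs z = Real.sqrt (Complex.normSq z) := Complex.norm_def z

lemma sq_abs (z : ℂ) : Complex.abs z ^ 2 = Complex.normSq z := Complex.sq_norm z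

lemma abs_ofReal (r : ℝ) : Complex.abs (r : ℂ) = |r| := by simp

lemma abs_conj (z : ℂ) : Complex.abs ((starRingEnd ℂ) z) = Complex.abs z := by simp

lemma abs_two : Complex.abs (2 : ℂ) = 2 := by simp

lemma abs_I : Complex.abs Complex.I = 1 := by simp

lemma continuous_abs : Continuous (Complex.abs : ℂ → ℝ) := continuous_norm

lemma abs_deriv_le_one_of_mapsTo_ball {f : ℂ → ℂ} {c : ℂ} {R : ℝ}
    (hd : DifferentiableOn ℂ f (Metric.ball c R))
    (h_maps : Set.MapsTo f (Metric.ball c R) (Metric.ball c R)) (hc : f c = c) (h₀ : 0 < R) :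
    Complex.abs (deriv f c) ≤ 1 := by
  rw [abs_eq_norm']
  refine Complex.norm_deriv_le_one_of_mapsTo_ball hd ?_ h₀
  rw [hc]; exact h_maps.mono_right Metric.ball_subset_closedBall

end Complex

namespace AutG2Proof

open Complex Metric

/-! ### Elementary facts about the unit disc and Möbius maps -/

lemma mem_unitDisc {z : ℂ} : z ∈ unitDisc ↔ Complex.abs z < 1 := Iff.rfl

lemma normSq_lt_one_of_abs {z : ℂ} (h : Complex.abs z < 1) : Complex.normSq z < 1 := by
  rw [← Complex.sq_abs]; nlinarith [Complex.abs.nonneg z]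

lemma abs_lt_abs_of_normSq {x y : ℂ} (h : Complex.normSq x < Complex.normSq y) :
    Complex.abs x < Complex.abs y := by
  rw [Complex.abs_apply, Complex.abs_apply]
  exact Real.sqrt_lt_sqrt (Complex.normSq_nonneg x) h

lemma one_sub_ne_zero {w : ℂ} (h : Complex.abs w < 1) : (1 : ℂ) - w ≠ 0 := by
  intro h0
  have : (1 : ℂ) = w := by linear_combination h0
  rw [← this] at h; simp at h

/-- Key Möbius identity. -/
lemma normSq_mobius (a z : ℂ) :
    Complex.normSq (1 - (starRingEnd ℂ) a * z) - Complex.normSq (z - a)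
      = (1 - Complex.normSq a) * (1 - Complex.normSq z) := by
  simp only [Complex.normSq_apply, Complex.sub_re, Complex.sub_im, Complex.mul_re,
    Complex.mul_im, Complex.one_re, Complex.one_im, Complex.conj_re, Complex.conj_im]
  ring

lemma abs_mobius_lt_one {a z : ℂ} (ha : Complex.abs a < 1) (hz : Complex.abs z < 1) :
    Complex.abs ((z - a) / (1 - (starRingEnd ℂ) a * z)) < 1 := by
  have h1 : Complex.normSq a < 1 := normSq_lt_one_of_abs ha
  have h2 : Complex.normSq z < 1 := normSq_lt_one_of_abs hz
  have key := normSq_mobius a z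
  have hlt : Complex.normSq (z - a) < Complex.normSq (1 - (starRingEnd ℂ) a * z) := by
    nlinarith [Complex.normSq_nonneg (z - a)]
  have habs : Complex.abs (z - a) < Complex.abs (1 - (starRingEnd ℂ) a * z) :=
    abs_lt_abs_of_normSq hlt
  rw [map_div₀]
  exact div_lt_one (lt_of_le_of_lt (Complex.abs.nonneg _) habs) |>.mpr habs

/-- Schwarz–Pick lemma at the centre of the disc. -/
lemma schwarz_pick_zero {f : ℂ → ℂ} (hd : DifferentiableOn ℂ f (ball 0 1))
    (hm : MapsTo f (ball 0 1) (ball 0 1)) :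
    Complex.abs (deriv f 0) ≤ 1 - (Complex.abs (f 0))^2 := by
  have h0 : (0 : ℂ) ∈ ball (0 : ℂ) 1 := by simp
  set a := f 0 with ha
  have haabs : Complex.abs a < 1 := by
    have := hm h0; simpa [Complex.dist_eq] using this
  have hN : Complex.normSq a < 1 := normSq_lt_one_of_abs haabs
  set g : ℂ → ℂ := fun z => (f z - a) / (1 - (starRingEnd ℂ) a * f z) with hg
  have habsfz : ∀ z ∈ ball (0 : ℂ) 1, Complex.abs (f z) < 1 := by
    intro z hz; have := hm hz; simpa [Complex.dist_eq] using this
  have hden : ∀ z ∈ ball (0 : ℂ) 1, (1 : ℂ) - (starRingEnd ℂ) a * f z ≠ 0 := by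
    intro z hz
    apply one_sub_ne_zero
    rw [map_mul]
    calc Complex.abs ((starRingEnd ℂ) a) * Complex.abs (f z)
        ≤ 1 * Complex.abs (f z) := by
          apply mul_le_mul_of_nonneg_right _ (Complex.abs.nonneg _)
          rw [Complex.abs_conj]; exact le_of_lt haabs
      _ < 1 := by rw [one_mul]; exact habsfz z hz
  have hgd : DifferentiableOn ℂ g (ball 0 1) := by
    apply DifferentiableOn.div
    · exact hd.sub (differentiableOn_const a)
    · exact (differentiableOn_const 1).sub ((differentiableOn_const _).mul hd)
    · exact hden
  have hgm : MapsTo g (ball 0 1) (ball 0 1) := by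
    intro z hz
    have : Complex.abs (g z) < 1 := abs_mobius_lt_one haabs (habsfz z hz)
    simpa [Complex.dist_eq] using this
  have hg0 : g 0 = 0 := by simp [hg, ← ha]
  have hb := Complex.abs_deriv_le_one_of_mapsTo_ball hgd hgm hg0 one_pos
  -- compute deriv g 0
  have hfd : DifferentiableAt ℂ f 0 := hd.differentiableAt (isOpen_ball.mem_nhds h0)
  have hd1 : DifferentiableAt ℂ (fun z => f z - a) 0 := hfd.sub_const a
  have hd2 : DifferentiableAt ℂ (fun z => (1 : ℂ) - (starRingEnd ℂ) a * f z) 0 :=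
    (differentiableAt_const _).sub ((differentiableAt_const _).mul hfd)
  have hdenne : (1 : ℂ) - (starRingEnd ℂ) a * f 0 ≠ 0 := hden 0 h0
  have hconj : (starRingEnd ℂ) a * a = (Complex.normSq a : ℂ) := by
    rw [mul_comm, Complex.mul_conj]
  have hder : deriv g 0 = deriv f 0 / (1 - (Complex.normSq a : ℂ)) := by
    rw [hg]
    rw [deriv_fun_div hd1 hd2 hdenne]
    have e1 : deriv (fun z => f z - a) 0 = deriv f 0 := by
      simp [deriv_sub_const]
    have e2 : deriv (fun z => (1 : ℂ) - (starRingEnd ℂ) a * f z) 0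
        = -((starRingEnd ℂ) a * deriv f 0) := by
      rw [deriv_const_sub]
      rw [deriv_const_mul _ hfd]
    rw [e1, e2, ← ha]
    have : f 0 - a = 0 := by rw [← ha]; ring
    rw [this, hconj]
    have hne : (1 : ℂ) - (Complex.normSq a : ℂ) ≠ 0 := by
      intro h
      have : (Complex.normSq a : ℂ) = 1 := by linear_combination -h
      have : Complex.normSq a = 1 := by exact_mod_cast this
      linarith
    field_simp
    ring
  rw [hder] at hb
  rw [map_div₀] at hb
  have habs1 : Complex.abs ((1 : ℂ) - (Complex.normSq a : ℂ)) = 1 - Complex.normSq a := by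
    rw [show ((1 : ℂ) - (Complex.normSq a : ℂ)) = ((1 - Complex.normSq a : ℝ) : ℂ) by push_cast; ring]
    rw [Complex.abs_ofReal]
    rw [abs_of_pos (by linarith)]
  rw [habs1] at hb
  have h1N : (0:ℝ) < 1 - Complex.normSq a := by linarith
  rw [div_le_one h1N] at hb
  calc Complex.abs (deriv f 0) ≤ 1 - Complex.normSq a := hb
    _ = 1 - (Complex.abs a)^2 := by rw [Complex.sq_abs]
/-! ### The characterization of `G2` and its openness -/

lemma sym_identity (t₁ t₂ : ℂ) :
    (t₁ + t₂) - (starRingEnd ℂ) (t₁ + t₂) * (t₁ * t₂)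
      = t₁ * (1 - (Complex.normSq t₂ : ℂ)) + t₂ * (1 - (Complex.normSq t₁ : ℂ)) := by
  have e₁ : (starRingEnd ℂ) t₁ * t₁ = (Complex.normSq t₁ : ℂ) := by
    rw [mul_comm, Complex.mul_conj]
  have e₂ : (starRingEnd ℂ) t₂ * t₂ = (Complex.normSq t₂ : ℂ) := by
    rw [mul_comm, Complex.mul_conj]
  rw [map_add]
  linear_combination (-t₂) * e₁ + (-t₁) * e₂

lemma real_ineq1 {x y : ℝ} (hx0 : 0 ≤ x) (hy0 : 0 ≤ y) (hx : x < 1) (hy : y < 1) :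
    x*(1-y^2) + y*(1-x^2) < 1 - (x*y)^2 := by
  have hxy : x*y < 1 := by nlinarith
  have key : (1-x)*(1-y)*(1-x*y) > 0 :=
    mul_pos (mul_pos (by linarith) (by linarith)) (by linarith)
  nlinarith [key]

lemma real_ineq2 {x y : ℝ} (hx : 1 ≤ x) (hy0 : 0 ≤ y) (hxy : x*y < 1) :
    1 - (x*y)^2 ≤ x*(1-y^2) - y*(x^2-1) := by
  have hy : y < 1 := by
    calc y = 1*y := (one_mul y).symm
      _ ≤ x*y := mul_le_mul_of_nonneg_right hx hy0
      _ < 1 := hxy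
  have key : (x-1)*(1-y)*(1-x*y) ≥ 0 :=
    mul_nonneg (mul_nonneg (by linarith) (by linarith)) (by linarith)
  nlinarith [key]

lemma abs_mul_real (t : ℂ) {r : ℝ} (hr : 0 ≤ r) :
    Complex.abs (t * (r : ℂ)) = Complex.abs t * r := by
  rw [map_mul, Complex.abs_ofReal, _root_.abs_of_nonneg hr]

lemma G2_subset_omega {z : ℂ × ℂ} (hz : z ∈ G2) :
    Complex.abs z.2 < 1 ∧
      Complex.abs (z.1 - (starRingEnd ℂ) z.1 * z.2) < 1 - (Complex.abs z.2)^2 := by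
  obtain ⟨l₁, h1, l₂, h2, heq⟩ := hz
  rw [mem_unitDisc] at h1 h2
  subst heq
  have hz1 : (symPi l₁ l₂).1 = l₁ + l₂ := rfl
  have hz2 : (symPi l₁ l₂).2 = l₁ * l₂ := rfl
  rw [hz1, hz2]
  set x := Complex.abs l₁ with hx
  set y := Complex.abs l₂ with hy
  have hx0 : 0 ≤ x := Complex.abs.nonneg _
  have hy0 : 0 ≤ y := Complex.abs.nonneg _
  constructor
  · rw [map_mul, ← hx, ← hy]; nlinarith
  · rw [sym_identity]
    have e2 : (1 : ℂ) - (Complex.normSq l₂ : ℂ) = ((1 - Complex.normSq l₂ : ℝ) : ℂ) := by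
      push_cast; ring
    have e1 : (1 : ℂ) - (Complex.normSq l₁ : ℂ) = ((1 - Complex.normSq l₁ : ℝ) : ℂ) := by
      push_cast; ring
    have hn1 : Complex.normSq l₁ = x^2 := (Complex.sq_abs l₁).symm
    have hn2 : Complex.normSq l₂ = y^2 := (Complex.sq_abs l₂).symm
    have hr2 : (0:ℝ) ≤ 1 - Complex.normSq l₂ := by rw [hn2]; nlinarith
    have hr1 : (0:ℝ) ≤ 1 - Complex.normSq l₁ := by rw [hn1]; nlinarith
    calc Complex.abs (l₁ * ((1:ℂ) - (Complex.normSq l₂ : ℂ))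
            + l₂ * ((1:ℂ) - (Complex.normSq l₁ : ℂ)))
        ≤ Complex.abs (l₁ * ((1:ℂ) - (Complex.normSq l₂ : ℂ)))
            + Complex.abs (l₂ * ((1:ℂ) - (Complex.normSq l₁ : ℂ))) := Complex.abs.add_le _ _
      _ = x * (1 - Complex.normSq l₂) + y * (1 - Complex.normSq l₁) := by
          rw [e1, e2, abs_mul_real _ hr2, abs_mul_real _ hr1]
      _ = x * (1 - y^2) + y * (1 - x^2) := by rw [hn1, hn2]
      _ < 1 - (x*y)^2 := real_ineq1 hx0 hy0 h1 h2
      _ = 1 - (Complex.abs (l₁ * l₂))^2 := by rw [map_mul, ← hx, ← hy]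

lemma abs_sub_le_abs_add (a b : ℂ) : Complex.abs a - Complex.abs b ≤ Complex.abs (a + b) := by
  have h := Complex.abs.add_le (a + b) (-b)
  simp only [map_neg_eq_map] at h
  have : a + b + -b = a := by ring
  rw [this] at h
  linarith

lemma root_small {t₁ t₂ : ℂ} (hp : Complex.abs (t₁*t₂) < 1)
    (h : Complex.abs ((t₁+t₂) - (starRingEnd ℂ) (t₁+t₂) * (t₁*t₂))
          < 1 - (Complex.abs (t₁*t₂))^2) :
    Complex.abs t₁ < 1 := by
  by_contra hx1
  push_neg at hx1
  set x := Complex.abs t₁ with hx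
  set y := Complex.abs t₂ with hy
  have hy0 : 0 ≤ y := Complex.abs.nonneg _
  have hxy : x*y < 1 := by rw [map_mul] at hp; exact hp
  have hn1 : Complex.normSq t₁ = x^2 := (Complex.sq_abs t₁).symm
  have hn2 : Complex.normSq t₂ = y^2 := (Complex.sq_abs t₂).symm
  have hyl : y < 1 := by
    calc y = 1*y := (one_mul y).symm
      _ ≤ x*y := mul_le_mul_of_nonneg_right hx1 hy0
      _ < 1 := hxy
  have e2 : (1 : ℂ) - (Complex.normSq t₂ : ℂ) = ((1 - Complex.normSq t₂ : ℝ) : ℂ) := by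
    push_cast; ring
  have e1 : (1 : ℂ) - (Complex.normSq t₁ : ℂ) = ((1 - Complex.normSq t₁ : ℝ) : ℂ) := by
    push_cast; ring
  have hr2 : (0:ℝ) ≤ 1 - Complex.normSq t₂ := by rw [hn2]; nlinarith
  have hA : Complex.abs (t₁ * ((1:ℂ) - (Complex.normSq t₂ : ℂ))) = x * (1 - y^2) := by
    rw [e2, abs_mul_real _ hr2, hn2]
  have hB : Complex.abs (t₂ * ((1:ℂ) - (Complex.normSq t₁ : ℂ))) = y * (x^2 - 1) := by
    rw [e1, map_mul, Complex.abs_ofReal, abs_of_nonpos (by rw [hn1]; nlinarith), hn1]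
    ring
  have hlow : x * (1 - y^2) - y * (x^2 - 1)
      ≤ Complex.abs ((t₁+t₂) - (starRingEnd ℂ) (t₁+t₂) * (t₁*t₂)) := by
    rw [sym_identity]
    calc x * (1 - y^2) - y * (x^2 - 1)
        = Complex.abs (t₁ * ((1:ℂ) - (Complex.normSq t₂ : ℂ)))
          - Complex.abs (t₂ * ((1:ℂ) - (Complex.normSq t₁ : ℂ))) := by rw [hA, hB]
      _ ≤ _ := abs_sub_le_abs_add _ _
  have hup : 1 - (x*y)^2 ≤ x*(1-y^2) - y*(x^2-1) := real_ineq2 hx1 hy0 hxy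
  rw [map_mul, ← hx, ← hy] at h
  linarith

lemma mem_G2_of_omega {z : ℂ × ℂ}
    (h2 : Complex.abs z.2 < 1)
    (h1 : Complex.abs (z.1 - (starRingEnd ℂ) z.1 * z.2) < 1 - (Complex.abs z.2)^2) :
    z ∈ G2 := by
  obtain ⟨d, hd⟩ := IsAlgClosed.exists_pow_nat_eq (k := ℂ) (z.1^2 - 4*z.2) (n := 2) (by norm_num)
  set t₁ := (z.1 + d)/2 with ht₁
  set t₂ := (z.1 - d)/2 with ht₂
  have hsum : t₁ + t₂ = z.1 := by rw [ht₁, ht₂]; ring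
  have hprod : t₁ * t₂ = z.2 := by rw [ht₁, ht₂]; linear_combination (-(1:ℂ)/4) * hd
  have hp : Complex.abs (t₁*t₂) < 1 := by rw [hprod]; exact h2
  have h' : Complex.abs ((t₁+t₂) - (starRingEnd ℂ) (t₁+t₂) * (t₁*t₂))
      < 1 - (Complex.abs (t₁*t₂))^2 := by rw [hsum, hprod]; exact h1
  have hone : Complex.abs t₁ < 1 := root_small hp h'
  have htwo : Complex.abs t₂ < 1 := by
    have hp' : Complex.abs (t₂*t₁) < 1 := by rwa [mul_comm]
    have h'' : Complex.abs ((t₂+t₁) - (starRingEnd ℂ) (t₂+t₁) * (t₂*t₁))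
        < 1 - (Complex.abs (t₂*t₁))^2 := by
      rw [show t₂+t₁ = t₁+t₂ from add_comm _ _, show t₂*t₁ = t₁*t₂ from mul_comm _ _]
      exact h'
    exact root_small hp' h''
  exact ⟨t₁, hone, t₂, htwo, by rw [symPi, hsum, hprod]⟩

lemma isOpen_G2 : IsOpen G2 := by
  have hset : G2 = {z : ℂ × ℂ | Complex.abs z.2 < 1} ∩
      {z : ℂ × ℂ | Complex.abs (z.1 - (starRingEnd ℂ) z.1 * z.2) + (Complex.abs z.2)^2 < 1} := by
    ext z
    constructor
    · intro hz
      obtain ⟨a, b⟩ := G2_subset_omega hz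
      exact ⟨a, by simp only [Set.mem_setOf_eq]; linarith⟩
    · rintro ⟨a, b⟩
      exact mem_G2_of_omega a (by simp at b ⊢; linarith)
  rw [hset]
  apply IsOpen.inter
  · exact isOpen_lt (Complex.continuous_abs.comp continuous_snd) continuous_const
  · apply isOpen_lt _ continuous_const
    apply Continuous.add
    · exact Complex.continuous_abs.comp
        (continuous_fst.sub ((Complex.continuous_conj.comp continuous_fst).mul continuous_snd))
    · exact (Complex.continuous_abs.comp continuous_snd).pow 2
/-! ### The magic functions `Φ_ω` -/

/-- `Φ_ω(s,p) = (2ωp - s)/(2 - ωs)`. -/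
def Phi (ω : ℂ) (z : ℂ × ℂ) : ℂ := (2*ω*z.2 - z.1) / (2 - ω*z.1)

lemma abs_fst_lt_two {z : ℂ × ℂ} (hz : z ∈ G2) : Complex.abs z.1 < 2 := by
  obtain ⟨l₁, h1, l₂, h2, heq⟩ := hz
  rw [mem_unitDisc] at h1 h2
  subst heq
  calc Complex.abs (l₁ + l₂) ≤ Complex.abs l₁ + Complex.abs l₂ := Complex.abs.add_le _ _
    _ < 2 := by linarith

lemma phi_den_ne {ω : ℂ} (hω : Complex.abs ω = 1) {z : ℂ × ℂ} (hz : z ∈ G2) :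
    2 - ω*z.1 ≠ 0 := by
  intro h
  have h2 : (2 : ℂ) = ω * z.1 := by linear_combination h
  have : Complex.abs (2 : ℂ) = Complex.abs (ω*z.1) := by rw [← h2]
  rw [map_mul, hω, one_mul, Complex.abs_two] at this
  have := abs_fst_lt_two hz
  linarith

/-- Core inequality: `|2ab - a - b| < |2 - a - b|` for `a, b` in the unit disc. -/
lemma core_ineq {a b : ℂ} (ha : Complex.abs a < 1) (hb : Complex.abs b < 1) :
    Complex.abs (2*a*b - a - b) < Complex.abs (2 - a - b) := by
  set u := 1 - a with hu
  set v := 1 - b with hv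
  have hNa : Complex.normSq a < 1 := normSq_lt_one_of_abs ha
  have hNb : Complex.normSq b < 1 := normSq_lt_one_of_abs hb
  have hure : 2*u.re > Complex.normSq u := by
    have : Complex.normSq a = Complex.normSq (1 - u) := by rw [hu]; ring_nf
    rw [this] at hNa
    simp only [Complex.normSq_apply, Complex.sub_re, Complex.sub_im, Complex.one_re,
      Complex.one_im] at hNa ⊢
    nlinarith
  have hvre : 2*v.re > Complex.normSq v := by
    have : Complex.normSq b = Complex.normSq (1 - v) := by rw [hv]; ring_nf
    rw [this] at hNb
    simp only [Complex.normSq_apply, Complex.sub_re, Complex.sub_im, Complex.one_re,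
      Complex.one_im] at hNb ⊢
    nlinarith
  have huz : u ≠ 0 := by
    rw [hu]; exact one_sub_ne_zero ha
  have hvz : v ≠ 0 := by
    rw [hv]; exact one_sub_ne_zero hb
  have hNu : 0 < Complex.normSq u := Complex.normSq_pos.mpr huz
  have hNv : 0 < Complex.normSq v := Complex.normSq_pos.mpr hvz
  have key : Complex.normSq (2 - a - b) - Complex.normSq (2*a*b - a - b)
      = 4*(Complex.normSq u * v.re + Complex.normSq v * u.re
          - Complex.normSq u * Complex.normSq v) := by
    rw [hu, hv]
    simp only [Complex.normSq_apply, Complex.sub_re, Complex.sub_im, Complex.mul_re,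
      Complex.mul_im, Complex.one_re, Complex.one_im, Complex.ofReal_re, Complex.ofReal_im]
    norm_num
    ring
  have hpos : Complex.normSq (2*a*b - a - b) < Complex.normSq (2 - a - b) := by
    nlinarith [mul_pos hNu hNv]
  exact abs_lt_abs_of_normSq hpos

lemma abs_Phi_lt_one {ω : ℂ} (hω : Complex.abs ω = 1) {z : ℂ × ℂ} (hz : z ∈ G2) :
    Complex.abs (Phi ω z) < 1 := by
  obtain ⟨l₁, h1, l₂, h2, heq⟩ := hz
  rw [mem_unitDisc] at h1 h2
  have hωne : ω ≠ 0 := by intro h; rw [h] at hω; simp at hω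
  have hz1 : z.1 = l₁ + l₂ := by rw [← heq]; rfl
  have hz2 : z.2 = l₁ * l₂ := by rw [← heq]; rfl
  have e1 : 2*ω*z.2 - z.1 = ω⁻¹ * (2*(ω*l₁)*(ω*l₂) - (ω*l₁) - (ω*l₂)) := by
    rw [hz1, hz2]
    field_simp
    ring
  have e2 : 2 - ω*z.1 = 2 - (ω*l₁) - (ω*l₂) := by rw [hz1]; ring
  have hm1 : Complex.abs (ω*l₁) < 1 := by rw [map_mul, hω, one_mul]; exact h1
  have hm2 : Complex.abs (ω*l₂) < 1 := by rw [map_mul, hω, one_mul]; exact h2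
  have hcore := core_ineq hm1 hm2
  have habsinv : Complex.abs (ω⁻¹) = 1 := by rw [map_inv₀, hω]; norm_num
  have hnum : Complex.abs (2*ω*z.2 - z.1) = Complex.abs (2*(ω*l₁)*(ω*l₂) - (ω*l₁) - (ω*l₂)) := by
    rw [e1, map_mul, habsinv, one_mul]
  have hden : Complex.abs (2 - ω*z.1) = Complex.abs (2 - (ω*l₁) - (ω*l₂)) := by rw [e2]
  rw [Phi, map_div₀, hnum, hden]
  have hdenpos : 0 < Complex.abs (2 - (ω*l₁) - (ω*l₂)) :=
    lt_of_le_of_lt (Complex.abs.nonneg _) hcore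
  exact (div_lt_one hdenpos).mpr hcore

/-- The derivative of `Φ_ω`. -/
def phiD (ω : ℂ) (z : ℂ × ℂ) : (ℂ × ℂ) →L[ℂ] ℂ :=
  ((2*ω^2*z.2 - 2)/(2 - ω*z.1)^2) • (ContinuousLinearMap.fst ℂ ℂ ℂ) +
  ((2*ω)/(2 - ω*z.1)) • (ContinuousLinearMap.snd ℂ ℂ ℂ)

lemma phiD_apply (ω : ℂ) (z v : ℂ × ℂ) :
    phiD ω z v = ((2*ω^2*z.2 - 2)/(2 - ω*z.1)^2) * v.1 + (2*ω/(2 - ω*z.1)) * v.2 := rfl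

lemma hasFDerivAt_Phi (ω : ℂ) (z : ℂ × ℂ) (h : 2 - ω*z.1 ≠ 0) :
    HasFDerivAt (Phi ω) (phiD ω z) z := by
  have h1 : HasFDerivAt (fun w : ℂ × ℂ => w.1) (ContinuousLinearMap.fst ℂ ℂ ℂ) z :=
    hasFDerivAt_fst
  have h2 : HasFDerivAt (fun w : ℂ × ℂ => w.2) (ContinuousLinearMap.snd ℂ ℂ ℂ) z :=
    hasFDerivAt_snd
  have hnum : HasFDerivAt (fun w : ℂ × ℂ => 2*ω*w.2 - w.1)
      ((2*ω) • (ContinuousLinearMap.snd ℂ ℂ ℂ) - (ContinuousLinearMap.fst ℂ ℂ ℂ)) z := by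
    have := (h2.const_mul (2*ω)).fun_sub h1
    convert this using 1
  have hden : HasFDerivAt (fun w : ℂ × ℂ => 2 - ω*w.1)
      ((0 : (ℂ × ℂ) →L[ℂ] ℂ) - ω • (ContinuousLinearMap.fst ℂ ℂ ℂ)) z := by
    have := (hasFDerivAt_const (2:ℂ) z).fun_sub (h1.const_mul ω)
    convert this using 1
  have hinv : HasFDerivAt (fun w : ℂ × ℂ => (2 - ω*w.1)⁻¹)
      ((-((2 - ω*z.1) ^ 2)⁻¹) • ((0 : (ℂ × ℂ) →L[ℂ] ℂ) - ω • (ContinuousLinearMap.fst ℂ ℂ ℂ))) z := by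
    have := (hasDerivAt_inv (x := (2 - ω*z.1)) h).comp_hasFDerivAt z hden
    exact this
  have hmul := hnum.fun_mul hinv
  have hfun : (fun w : ℂ × ℂ => (2*ω*w.2 - w.1) * (2 - ω*w.1)⁻¹) = Phi ω := by
    funext w; rw [Phi, div_eq_mul_inv]
  rw [hfun] at hmul
  have heq : phiD ω z = (2*ω*z.2 - z.1) •
        ((-((2 - ω*z.1) ^ 2)⁻¹) • ((0 : (ℂ × ℂ) →L[ℂ] ℂ)
          - ω • (ContinuousLinearMap.fst ℂ ℂ ℂ)))
      + ((2 - ω*z.1)⁻¹) •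
        ((2*ω) • (ContinuousLinearMap.snd ℂ ℂ ℂ) - (ContinuousLinearMap.fst ℂ ℂ ℂ)) := by
    apply ContinuousLinearMap.ext
    intro v
    simp only [phiD, ContinuousLinearMap.add_apply, ContinuousLinearMap.smul_apply,
      ContinuousLinearMap.coe_fst', ContinuousLinearMap.coe_snd', ContinuousLinearMap.sub_apply,
      ContinuousLinearMap.zero_apply, smul_eq_mul]
    field_simp
    ring
  rw [heq]
  exact hmul
/-! ### Composite Schwarz–Pick estimates -/

lemma mem_G2_pair {x y : ℂ} (hx : Complex.abs x < 1) (hy : Complex.abs y < 1) :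
    ((x + y, x * y) : ℂ × ℂ) ∈ G2 := ⟨x, hx, y, hy, rfl⟩

lemma mem_G2_zero_fst {q : ℂ} (hq : Complex.abs q < 1) : ((0 : ℂ), q) ∈ G2 := by
  obtain ⟨τ, hτ⟩ := IsAlgClosed.exists_pow_nat_eq (k := ℂ) (-q) (n := 2) (by norm_num)
  have habs : Complex.abs τ < 1 := by
    have h2 : (Complex.abs τ)^2 = Complex.abs q := by
      rw [← map_pow, hτ, map_neg_eq_map]
    nlinarith [Complex.abs.nonneg τ, Complex.abs.nonneg q]
  have : ((τ + -τ, τ * -τ) : ℂ × ℂ) = ((0 : ℂ), q) := by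
    have : τ * -τ = q := by linear_combination -hτ
    rw [this]; norm_num
  rw [← this]
  exact mem_G2_pair habs (by rwa [map_neg_eq_map])

/-- The master Schwarz–Pick estimate along an analytic disc through a holomorphic self-map. -/
lemma composite_SP {H : ℂ × ℂ → ℂ × ℂ} (hdH : DifferentiableOn ℂ H G2) (hmH : MapsTo H G2 G2)
    {χ : ℂ → ℂ × ℂ}
    (hχd : ∀ t ∈ ball (0 : ℂ) 1, DifferentiableAt ℂ χ t)
    (hχm : ∀ t ∈ ball (0 : ℂ) 1, χ t ∈ G2)
    {u : ℂ × ℂ} (hχ0 : HasDerivAt χ u 0) {ω : ℂ} (hω : Complex.abs ω = 1) :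
    Complex.abs (phiD ω (H (χ 0)) ((fderiv ℂ H (χ 0)) u))
      ≤ 1 - (Complex.abs (Phi ω (H (χ 0))))^2 := by
  have h0 : (0 : ℂ) ∈ ball (0 : ℂ) 1 := by simp
  have hbase : χ 0 ∈ G2 := hχm 0 h0
  have hHbase : H (χ 0) ∈ G2 := hmH hbase
  set φc : ℂ → ℂ := fun t => Phi ω (H (χ t)) with hφc
  have hdiffat : ∀ t ∈ ball (0 : ℂ) 1, DifferentiableAt ℂ φc t := by
    intro t ht
    have h1 : DifferentiableAt ℂ χ t := hχd t ht
    have h2 : DifferentiableAt ℂ H (χ t) :=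
      hdH.differentiableAt (isOpen_G2.mem_nhds (hχm t ht))
    have h3 : DifferentiableAt ℂ (Phi ω) (H (χ t)) :=
      (hasFDerivAt_Phi ω (H (χ t)) (phi_den_ne hω (hmH (hχm t ht)))).differentiableAt
    have := (h3.comp t (h2.comp t h1) : DifferentiableAt ℂ ((Phi ω) ∘ (H ∘ χ)) t)
    exact this
  have hdOn : DifferentiableOn ℂ φc (ball 0 1) := fun t ht =>
    (hdiffat t ht).differentiableWithinAt
  have hmTo : MapsTo φc (ball 0 1) (ball 0 1) := by
    intro t ht
    have : Complex.abs (φc t) < 1 := abs_Phi_lt_one hω (hmH (hχm t ht))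
    simpa [Complex.dist_eq] using this
  have hSP := schwarz_pick_zero hdOn hmTo
  have hHd : HasFDerivAt H (fderiv ℂ H (χ 0)) (χ 0) :=
    (hdH.differentiableAt (isOpen_G2.mem_nhds hbase)).hasFDerivAt
  have hcomp1 : HasDerivAt (fun t => H (χ t)) ((fderiv ℂ H (χ 0)) u) 0 := by
    have := hHd.comp_hasDerivAt 0 hχ0
    exact this
  have hΦd : HasFDerivAt (Phi ω) (phiD ω (H (χ 0))) (H (χ 0)) :=
    hasFDerivAt_Phi ω (H (χ 0)) (phi_den_ne hω hHbase)
  have hcomp2 : HasDerivAt φc (phiD ω (H (χ 0)) ((fderiv ℂ H (χ 0)) u)) 0 := by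
    have := hΦd.comp_hasDerivAt 0 hcomp1
    exact this
  have hder : deriv φc 0 = phiD ω (H (χ 0)) ((fderiv ℂ H (χ 0)) u) := hcomp2.deriv
  rw [hder] at hSP
  exact hSP
/-! ### Linear algebra of the extremality argument -/

/-- The linear functional `v ↦ DΦ_ω(0,1/4)(v)`. -/
def Qf (v : ℂ × ℂ) (ω : ℂ) : ℂ := (ω^2 - 4)/8 * v.1 + ω * v.2

/-- The linear functional `v ↦ DΦ_ω(0,0)(v)`. -/
def Q0 (v : ℂ × ℂ) (ω : ℂ) : ℂ := -v.1/2 + ω * v.2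

/-- The norm whose unit ball is the Kobayashi indicatrix of `G₂` at the origin. -/
def Nn (v : ℂ × ℂ) : ℝ := Complex.abs v.1 / 2 + Complex.abs v.2

lemma Qf_add (a b : ℂ × ℂ) (ω : ℂ) : Qf (a + b) ω = Qf a ω + Qf b ω := by
  simp only [Qf, Prod.fst_add, Prod.snd_add]; ring

lemma Qf_sub (a b : ℂ × ℂ) (ω : ℂ) : Qf (a - b) ω = Qf a ω - Qf b ω := by
  simp only [Qf, Prod.fst_sub, Prod.snd_sub]; ring

lemma Qf_smul (c : ℂ) (a : ℂ × ℂ) (ω : ℂ) : Qf (c • a) ω = c * Qf a ω := by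
  simp only [Qf, Prod.smul_fst, Prod.smul_snd, smul_eq_mul]; ring

lemma vec_split (x : ℂ × ℂ) : x = x.1 • ((1:ℂ),(0:ℂ)) + x.2 • ((0:ℂ),(1:ℂ)) := by
  ext <;> simp

/-- Strict convexity of the disc: two points of a disc whose midpoint is on the
boundary coincide. -/
lemma disc_strict_convex {a b : ℂ} {R : ℝ} (ha : Complex.abs a ≤ R)
    (hb : Complex.abs b ≤ R) (hab : Complex.abs (a + b) = 2*R) : a = b := by
  have hR : 0 ≤ R := by
    have := Complex.abs.nonneg (a + b); linarith
  have hid : Complex.normSq (a - b)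
      = 2*Complex.normSq a + 2*Complex.normSq b - Complex.normSq (a + b) := by
    simp only [Complex.normSq_apply, Complex.sub_re, Complex.sub_im, Complex.add_re,
      Complex.add_im]
    ring
  have h1 : Complex.normSq a ≤ R^2 := by
    rw [← Complex.sq_abs]; nlinarith [Complex.abs.nonneg a]
  have h2 : Complex.normSq b ≤ R^2 := by
    rw [← Complex.sq_abs]; nlinarith [Complex.abs.nonneg b]
  have h3 : Complex.normSq (a + b) = 4*R^2 := by
    rw [← Complex.sq_abs, hab]; ring
  have h4 : Complex.normSq (a - b) ≤ 0 := by rw [hid, h3]; linarith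
  have h5 : a - b = 0 := by
    have := Complex.normSq_nonneg (a - b)
    exact Complex.normSq_eq_zero.mp (le_antisymm h4 this)
  linear_combination h5

/-- A nonzero functional family `Qf d ·` cannot vanish at two distinct points
of the unit circle. -/
lemma Qf_roots {d : ℂ × ℂ} {ω₁ ω₂ : ℂ} (h1 : Complex.abs ω₁ = 1)
    (h2 : Complex.abs ω₂ = 1) (hne : ω₁ ≠ ω₂)
    (e1 : Qf d ω₁ = 0) (e2 : Qf d ω₂ = 0) : d = 0 := by
  have hsub : (ω₁ - ω₂) * ((ω₁ + ω₂)/8 * d.1 + d.2) = 0 := by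
    rw [Qf] at e1 e2
    linear_combination e1 - e2
  have hωne : ω₁ - ω₂ ≠ 0 := sub_ne_zero.mpr hne
  have hlin : (ω₁ + ω₂)/8 * d.1 + d.2 = 0 := by
    rcases mul_eq_zero.mp hsub with h | h
    · exact absurd h hωne
    · exact h
  have hd2 : d.2 = -(ω₁ + ω₂)/8 * d.1 := by linear_combination hlin
  have hkey : d.1 * (ω₁ * ω₂ + 4) = 0 := by
    rw [Qf, hd2] at e1
    linear_combination (-8 : ℂ) * e1
  have hne4 : ω₁ * ω₂ + 4 ≠ 0 := by
    intro h
    have : ω₁ * ω₂ = -4 := by linear_combination h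
    have habs : Complex.abs (ω₁ * ω₂) = 4 := by
      rw [this]
      simp [Complex.abs_ofReal]
    rw [map_mul, h1, h2] at habs
    norm_num at habs
  have hd1 : d.1 = 0 := by
    rcases mul_eq_zero.mp hkey with h | h
    · exact h
    · exact absurd h hne4
  have hd2' : d.2 = 0 := by rw [hd2, hd1]; ring
  exact Prod.ext hd1 hd2'

lemma N_le_of {v : ℂ × ℂ}
    (h : ∀ ω : ℂ, Complex.abs ω = 1 → Complex.abs (Q0 v ω) ≤ 1) : Nn v ≤ 1 := by
  by_cases hv1 : v.1 = 0
  · have := h 1 (by simp)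
    rw [Q0, hv1] at this
    simp at this
    rw [Nn, hv1]
    simpa using this
  by_cases hv2 : v.2 = 0
  · have := h 1 (by simp)
    rw [Q0, hv2] at this
    rw [Nn, hv2]
    rw [mul_zero, add_zero] at this
    have habs : Complex.abs (-v.1/2) = Complex.abs v.1 / 2 := by
      rw [map_div₀, map_neg_eq_map, Complex.abs_two]
    rw [habs] at this
    simpa using this
  · set r1 := Complex.abs v.1 with hr1
    set r2 := Complex.abs v.2 with hr2
    have hr1p : 0 < r1 := Complex.abs.pos hv1
    have hr2p : 0 < r2 := Complex.abs.pos hv2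
    set ω : ℂ := -(v.1 * (starRingEnd ℂ) v.2) / ((r1*r2 : ℝ) : ℂ) with hω
    have habsnum : Complex.abs (v.1 * (starRingEnd ℂ) v.2) = r1 * r2 := by
      rw [map_mul, Complex.abs_conj, ← hr1, ← hr2]
    have hωabs : Complex.abs ω = 1 := by
      rw [hω, map_div₀, map_neg_eq_map, habsnum, Complex.abs_ofReal]
      rw [_root_.abs_of_pos (by positivity)]
      field_simp
    have hc : (starRingEnd ℂ) v.2 * v.2 = ((r2^2 : ℝ) : ℂ) := by
      rw [mul_comm, Complex.mul_conj, hr2, Complex.sq_abs]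
    have hrne : ((r1*r2 : ℝ) : ℂ) ≠ 0 := by
      simp only [ne_eq, Complex.ofReal_eq_zero]
      positivity
    have hr1ne : ((r1 : ℝ) : ℂ) ≠ 0 := by
      simp only [ne_eq, Complex.ofReal_eq_zero]; positivity
    have hr2ne : ((r2 : ℝ) : ℂ) ≠ 0 := by
      simp only [ne_eq, Complex.ofReal_eq_zero]; positivity
    have key : ω * v.2 = -v.1 * ((r2/r1 : ℝ) : ℂ) := by
      calc ω * v.2 = -(v.1 * ((starRingEnd ℂ) v.2 * v.2)) / ((r1*r2 : ℝ) : ℂ) := by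
            rw [hω]; ring
        _ = -(v.1 * ((r2^2 : ℝ) : ℂ)) / ((r1*r2 : ℝ) : ℂ) := by rw [hc]
        _ = -v.1 * ((r2/r1 : ℝ) : ℂ) := by
            push_cast
            field_simp
    have e : Q0 v ω = -(v.1) * ((1/2 + r2/r1 : ℝ) : ℂ) := by
      rw [Q0, key]
      push_cast
      ring
    have habsQ : Complex.abs (Q0 v ω) = r1/2 + r2 := by
      rw [e, map_mul, map_neg_eq_map, ← hr1, Complex.abs_ofReal,
        _root_.abs_of_pos (by positivity)]
      field_simp
    have := h ω hωabs
    rw [habsQ] at this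
    rw [Nn, ← hr1, ← hr2]
    linarith

lemma exists_decomp {v : ℂ × ℂ} (h1 : v.1 ≠ 0) (h2 : v.2 ≠ 0) (hN : Nn v ≤ 1) :
    ∃ x y : ℂ × ℂ, Nn x ≤ 1 ∧ Nn y ≤ 1 ∧ x + y = v + v ∧ x ≠ y := by
  set r1 := Complex.abs v.1 with hr1
  set r2 := Complex.abs v.2 with hr2
  have hr1p : 0 < r1 := Complex.abs.pos h1
  have hr2p : 0 < r2 := Complex.abs.pos h2
  set ε : ℝ := min r1 r2 / 2 with hε
  have hεp : 0 < ε := by positivity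
  have hε1 : 2*ε ≤ r1 := by
    have : min r1 r2 ≤ r1 := min_le_left _ _
    rw [hε]; linarith
  have hε2 : ε ≤ r2 := by
    have : min r1 r2 ≤ r2 := min_le_right _ _
    rw [hε]; linarith
  have hc1 : (0:ℝ) ≤ 1 + 2*ε/r1 := by positivity
  have hc2 : (0:ℝ) ≤ 1 - ε/r2 := by
    have : ε/r2 ≤ 1 := (div_le_one hr2p).mpr hε2
    linarith
  have hc3 : (0:ℝ) ≤ 1 - 2*ε/r1 := by
    have : 2*ε/r1 ≤ 1 := (div_le_one hr1p).mpr hε1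
    linarith
  have hc4 : (0:ℝ) ≤ 1 + ε/r2 := by positivity
  have hNv : r1/2 + r2 ≤ 1 := by rw [Nn, ← hr1, ← hr2] at hN; exact hN
  refine ⟨(v.1 * ((1 + 2*ε/r1 : ℝ) : ℂ), v.2 * ((1 - ε/r2 : ℝ) : ℂ)),
          (v.1 * ((1 - 2*ε/r1 : ℝ) : ℂ), v.2 * ((1 + ε/r2 : ℝ) : ℂ)), ?_, ?_, ?_, ?_⟩
  · rw [Nn]
    simp only
    rw [abs_mul_real _ hc1, abs_mul_real _ hc2, ← hr1, ← hr2]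
    have he : r1 * (1 + 2*ε/r1) / 2 + r2 * (1 - ε/r2) = r1/2 + r2 := by
      field_simp
      ring
    rw [he]; exact hNv
  · rw [Nn]
    simp only
    rw [abs_mul_real _ hc3, abs_mul_real _ hc4, ← hr1, ← hr2]
    have he : r1 * (1 - 2*ε/r1) / 2 + r2 * (1 + ε/r2) = r1/2 + r2 := by
      field_simp
      ring
    rw [he]; exact hNv
  · rw [Prod.ext_iff]
    constructor <;> · simp only [Prod.fst_add, Prod.snd_add]; push_cast; ring
  · intro hcontra
    rw [Prod.ext_iff] at hcontra
    have h1' := hcontra.1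
    simp only at h1'
    have : ((1 + 2*ε/r1 : ℝ) : ℂ) = ((1 - 2*ε/r1 : ℝ) : ℂ) := mul_left_cancel₀ h1 h1'
    have hre : (1 + 2*ε/r1 : ℝ) = (1 - 2*ε/r1 : ℝ) := by exact_mod_cast this
    have : ε = 0 := by
      field_simp at hre
      linarith
    linarith
/-! ### The extremality argument -/

lemma axis_of (L M : (ℂ × ℂ) →L[ℂ] (ℂ × ℂ))
    (hML : ∀ x, M (L x) = x) (hLM : ∀ x, L (M x) = x)
    (hS₁ : ∀ ω : ℂ, Complex.abs ω = 1 → Complex.abs (Qf (L ((1:ℂ),(0:ℂ))) ω) ≤ 15/32)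
    (hS₂ : ∀ ω : ℂ, Complex.abs ω = 1 → Complex.abs (Qf (L ((0:ℂ),(1:ℂ))) ω) ≤ 15/16)
    (uh : ℂ × ℂ) (ω₁ ω₂ : ℂ) (hω₁ : Complex.abs ω₁ = 1) (hω₂ : Complex.abs ω₂ = 1)
    (hne : ω₁ ≠ ω₂)
    (hp1 : Complex.abs (Qf uh ω₁) = 15/16) (hp2 : Complex.abs (Qf uh ω₂) = 15/16)
    (hN : Nn (M uh) ≤ 1) :
    ((M uh).1 = 0 ∨ (M uh).2 = 0) ∧ M uh ≠ 0 := by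
  have hQLx : ∀ x : ℂ × ℂ, ∀ ω : ℂ, Complex.abs ω = 1 →
      Complex.abs (Qf (L x) ω) ≤ (15/16) * Nn x := by
    intro x ω hω
    have hLsplit : L x = x.1 • L ((1:ℂ),(0:ℂ)) + x.2 • L ((0:ℂ),(1:ℂ)) := by
      conv_lhs => rw [vec_split x]
      rw [map_add, map_smul, map_smul]
    rw [hLsplit, Qf_add, Qf_smul, Qf_smul]
    calc Complex.abs (x.1 * Qf (L ((1:ℂ),(0:ℂ))) ω + x.2 * Qf (L ((0:ℂ),(1:ℂ))) ω)
        ≤ Complex.abs (x.1 * Qf (L ((1:ℂ),(0:ℂ))) ω)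
          + Complex.abs (x.2 * Qf (L ((0:ℂ),(1:ℂ))) ω) := Complex.abs.add_le _ _
      _ = Complex.abs x.1 * Complex.abs (Qf (L ((1:ℂ),(0:ℂ))) ω)
          + Complex.abs x.2 * Complex.abs (Qf (L ((0:ℂ),(1:ℂ))) ω) := by
          rw [map_mul, map_mul]
      _ ≤ Complex.abs x.1 * (15/32) + Complex.abs x.2 * (15/16) := by
          apply add_le_add
          · exact mul_le_mul_of_nonneg_left (hS₁ ω hω) (Complex.abs.nonneg _)
          · exact mul_le_mul_of_nonneg_left (hS₂ ω hω) (Complex.abs.nonneg _)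
      _ = (15/16) * Nn x := by rw [Nn]; ring
  constructor
  · by_contra hboth
    push_neg at hboth
    obtain ⟨hv1, hv2⟩ := hboth
    obtain ⟨x, y, hNx, hNy, hxy, hxyne⟩ := exists_decomp hv1 hv2 hN
    have hsum : L x + L y = uh + uh := by
      rw [← map_add, hxy, map_add, hLM]
    have key : ∀ ω : ℂ, Complex.abs ω = 1 → Complex.abs (Qf uh ω) = 15/16 →
        Qf (L x) ω = Qf (L y) ω := by
      intro ω hω hp
      apply disc_strict_convex (R := 15/16)
      · calc Complex.abs (Qf (L x) ω) ≤ (15/16) * Nn x := hQLx x ω hω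
          _ ≤ 15/16 := by nlinarith
      · calc Complex.abs (Qf (L y) ω) ≤ (15/16) * Nn y := hQLx y ω hω
          _ ≤ 15/16 := by nlinarith
      · have : Qf (L x) ω + Qf (L y) ω = 2 * Qf uh ω := by
          rw [← Qf_add, hsum, Qf_add]; ring
        rw [this, map_mul, Complex.abs_two, hp]
    have e1 : Qf (L x - L y) ω₁ = 0 := by
      rw [Qf_sub, key ω₁ hω₁ hp1]; ring
    have e2 : Qf (L x - L y) ω₂ = 0 := by
      rw [Qf_sub, key ω₂ hω₂ hp2]; ring
    have hd0 : L x - L y = 0 := Qf_roots hω₁ hω₂ hne e1 e2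
    have : x = y := by
      have h1 : L x = L y := by
        have := hd0
        rwa [sub_eq_zero] at this
      calc x = M (L x) := (hML x).symm
        _ = M (L y) := by rw [h1]
        _ = y := hML y
    exact hxyne this
  · intro h0
    have huh : uh = 0 := by
      calc uh = L (M uh) := (hLM uh).symm
        _ = L 0 := by rw [h0]
        _ = 0 := map_zero L
    rw [huh] at hp1
    have hq0 : Qf (0 : ℂ × ℂ) ω₁ = 0 := by
      simp [Qf]
    rw [hq0] at hp1
    simp only [map_zero] at hp1
    exact absurd hp1 (by norm_num)
/-! ### Explicit analytic discs -/

lemma one_add_ne_zero {w : ℂ} (h : Complex.abs w < 1) : (1 : ℂ) + w ≠ 0 := by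
  have := one_sub_ne_zero (w := -w) (by rwa [map_neg_eq_map])
  simpa using this

/-- Möbius self-maps of the disc. -/
def mo (e a : ℂ) (t : ℂ) : ℂ := (e*t + a) / (1 + (starRingEnd ℂ) a * e * t)

lemma mo_den_ne {e a : ℂ} (he : Complex.abs e = 1) (ha : Complex.abs a < 1) {t : ℂ}
    (ht : Complex.abs t < 1) : (1 : ℂ) + (starRingEnd ℂ) a * e * t ≠ 0 := by
  apply one_add_ne_zero
  rw [map_mul, map_mul, Complex.abs_conj, he, mul_one]
  calc Complex.abs a * Complex.abs t ≤ 1 * Complex.abs t := by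
        apply mul_le_mul_of_nonneg_right (le_of_lt ha) (Complex.abs.nonneg _)
    _ < 1 := by rwa [one_mul]

lemma mo_abs_lt {e a : ℂ} (he : Complex.abs e = 1) (ha : Complex.abs a < 1) {t : ℂ}
    (ht : Complex.abs t < 1) : Complex.abs (mo e a t) < 1 := by
  have het : Complex.abs (e*t) < 1 := by rw [map_mul, he, one_mul]; exact ht
  have hma : Complex.abs (-a) < 1 := by rwa [map_neg_eq_map]
  have h := abs_mobius_lt_one (a := -a) (z := e*t) hma het
  have heq : (e*t - -a) / (1 - (starRingEnd ℂ) (-a) * (e*t)) = mo e a t := by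
    rw [mo, map_neg]
    ring_nf
  rwa [heq] at h

lemma mo_diffAt {e a : ℂ} (he : Complex.abs e = 1) (ha : Complex.abs a < 1) {t : ℂ}
    (ht : Complex.abs t < 1) : DifferentiableAt ℂ (mo e a) t := by
  apply DifferentiableAt.div
  · exact (differentiableAt_id.const_mul e).add_const a
  · exact (differentiableAt_id.const_mul ((starRingEnd ℂ) a * e)).const_add 1
  · exact mo_den_ne he ha ht

lemma mo_zero (e a : ℂ) : mo e a 0 = a := by
  simp [mo]

lemma mo_hasDerivAt (e a : ℂ) :
    HasDerivAt (mo e a) (e * (1 - (Complex.normSq a : ℂ))) 0 := by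
  have hnum : HasDerivAt (fun t : ℂ => e*t + a) e 0 := by
    have := ((hasDerivAt_id (0:ℂ)).const_mul e).add_const a
    simpa using this
  have hden : HasDerivAt (fun t : ℂ => 1 + (starRingEnd ℂ) a * e * t)
      ((starRingEnd ℂ) a * e) 0 := by
    have := ((hasDerivAt_id (0:ℂ)).const_mul ((starRingEnd ℂ) a * e)).const_add 1
    simpa using this
  have hne : (1 : ℂ) + (starRingEnd ℂ) a * e * 0 ≠ 0 := by simp
  have h := hnum.fun_div hden hne
  have hmc : a * (starRingEnd ℂ) a = (Complex.normSq a : ℂ) := Complex.mul_conj a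
  refine h.congr_deriv (Eq.symm ?_)
  simp only [mul_zero, add_zero, mul_one]
  field_simp
  linear_combination e * hmc

/-- The flat disc `t ↦ (0,t)` rescaled: `t ↦ (0, mo 1 (1/4) t)`. -/
def psi2 (t : ℂ) : ℂ × ℂ := ((0 : ℂ), mo 1 (1/4) t)

/-- The geodesic discs `ψ_e(t) = π(mo e (i/2) t, mo ē (-i/2) t)` through `(0,1/4)`. -/
def psiE (e : ℂ) (t : ℂ) : ℂ × ℂ :=
  (mo e (Complex.I/2) t + mo ((starRingEnd ℂ) e) (-(Complex.I/2)) t,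
   mo e (Complex.I/2) t * mo ((starRingEnd ℂ) e) (-(Complex.I/2)) t)

lemma abs_I_half : Complex.abs (Complex.I/2) < 1 := by
  rw [map_div₀, Complex.abs_I, Complex.abs_two]
  norm_num

lemma abs_neg_I_half : Complex.abs (-(Complex.I/2)) < 1 := by
  rw [map_neg_eq_map]; exact abs_I_half

lemma psiE_mem {e : ℂ} (he : Complex.abs e = 1) {t : ℂ} (ht : Complex.abs t < 1) :
    psiE e t ∈ G2 := by
  have hce : Complex.abs ((starRingEnd ℂ) e) = 1 := by rwa [Complex.abs_conj]
  exact ⟨mo e (Complex.I/2) t, mo_abs_lt he abs_I_half ht,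
    mo ((starRingEnd ℂ) e) (-(Complex.I/2)) t, mo_abs_lt hce abs_neg_I_half ht, rfl⟩

lemma psi2_mem {t : ℂ} (ht : Complex.abs t < 1) : psi2 t ∈ G2 :=
  mem_G2_zero_fst (mo_abs_lt (by simp) (by norm_num) ht)

lemma psiE_zero (e : ℂ) : psiE e 0 = ((0 : ℂ), (1/4 : ℂ)) := by
  rw [psiE, mo_zero, mo_zero]
  simp only [Prod.mk.injEq]
  constructor
  · ring
  · have h := Complex.I_mul_I
    linear_combination (-(1:ℂ)/4) * h

lemma psi2_zero : psi2 0 = ((0 : ℂ), (1/4 : ℂ)) := by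
  rw [psi2, mo_zero]

lemma normSq_I_half : (Complex.normSq (Complex.I/2) : ℂ) = 1/4 := by
  have : Complex.normSq (Complex.I/2) = 1/4 := by
    simp [Complex.normSq_apply]
    norm_num
  rw [this]
  norm_num

lemma psiE_hasDerivAt (e : ℂ) :
    HasDerivAt (psiE e)
      ((3/4) * (e + (starRingEnd ℂ) e),
        (3/4) * (Complex.I/2) * ((starRingEnd ℂ) e - e)) 0 := by
  have hx := mo_hasDerivAt e (Complex.I/2)
  have hy := mo_hasDerivAt ((starRingEnd ℂ) e) (-(Complex.I/2))
  have hnx : (1 : ℂ) - (Complex.normSq (Complex.I/2) : ℂ) = 3/4 := by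
    rw [normSq_I_half]; norm_num
  have hny : (1 : ℂ) - (Complex.normSq (-(Complex.I/2)) : ℂ) = 3/4 := by
    rw [Complex.normSq_neg, normSq_I_half]; norm_num
  rw [hnx] at hx
  rw [hny] at hy
  have hadd := hx.fun_add hy
  have hmul := hx.fun_mul hy
  rw [mo_zero, mo_zero] at hmul
  have hprod := hadd.prodMk hmul
  have : psiE e = fun t => (mo e (Complex.I/2) t + mo ((starRingEnd ℂ) e) (-(Complex.I/2)) t,
      mo e (Complex.I/2) t * mo ((starRingEnd ℂ) e) (-(Complex.I/2)) t) := rfl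
  rw [this]
  convert hprod using 2
  · ring
  · ring

lemma psi2_hasDerivAt : HasDerivAt psi2 ((0 : ℂ), (15/16 : ℂ)) 0 := by
  have hy := mo_hasDerivAt 1 (1/4 : ℂ)
  have hn : (1 : ℂ) * (1 - (Complex.normSq (1/4 : ℂ) : ℂ)) = 15/16 := by
    have : Complex.normSq (1/4 : ℂ) = 1/16 := by
      simp [Complex.normSq_apply]
      norm_num
    rw [this]
    norm_num
  rw [hn] at hy
  exact (hasDerivAt_const 0 (0:ℂ)).prodMk hy

lemma psiE_diffAt {e : ℂ} (he : Complex.abs e = 1) {t : ℂ} (ht : Complex.abs t < 1) :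
    DifferentiableAt ℂ (psiE e) t := by
  have hce : Complex.abs ((starRingEnd ℂ) e) = 1 := by rwa [Complex.abs_conj]
  have h1 := mo_diffAt he abs_I_half ht
  have h2 := mo_diffAt hce abs_neg_I_half ht
  exact (h1.add h2).prodMk (h1.mul h2)

lemma psi2_diffAt {t : ℂ} (ht : Complex.abs t < 1) : DifferentiableAt ℂ psi2 t := by
  have h2 := mo_diffAt (e := 1) (a := (1/4 : ℂ)) (by simp) (by norm_num) ht
  exact (differentiableAt_const _).prodMk h2

/-- The royal disc `t ↦ (t+t, t*t)`. -/
def chi1 (t : ℂ) : ℂ × ℂ := (t + t, t * t)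

lemma chi1_mem {t : ℂ} (ht : Complex.abs t < 1) : chi1 t ∈ G2 := ⟨t, ht, t, ht, rfl⟩

lemma chi1_zero : chi1 0 = ((0:ℂ), (0:ℂ)) := by
  rw [chi1]; norm_num

lemma chi1_hasDerivAt : HasDerivAt chi1 ((2 : ℂ), (0 : ℂ)) 0 := by
  have h1 : HasDerivAt (fun t : ℂ => t + t) 2 0 := by
    have := (hasDerivAt_id (0:ℂ)).fun_add (hasDerivAt_id (0:ℂ))
    refine this.congr_deriv (Eq.symm ?_)
    norm_num
  have h2 : HasDerivAt (fun t : ℂ => t * t) 0 0 := by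
    have := (hasDerivAt_id (0:ℂ)).fun_mul (hasDerivAt_id (0:ℂ))
    refine this.congr_deriv (Eq.symm ?_)
    norm_num
  exact h1.prodMk h2

lemma chi1_diffAt (t : ℂ) : DifferentiableAt ℂ chi1 t :=
  (differentiableAt_id.add differentiableAt_id).prodMk
    (differentiableAt_id.mul differentiableAt_id)

/-- The flat disc `t ↦ (0,t)`. -/
def chi2 (t : ℂ) : ℂ × ℂ := ((0 : ℂ), t)

lemma chi2_mem {t : ℂ} (ht : Complex.abs t < 1) : chi2 t ∈ G2 := mem_G2_zero_fst ht

lemma chi2_hasDerivAt : HasDerivAt chi2 ((0 : ℂ), (1 : ℂ)) 0 :=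
  (hasDerivAt_const 0 (0:ℂ)).prodMk (hasDerivAt_id 0)

lemma chi2_diffAt (t : ℂ) : DifferentiableAt ℂ chi2 t :=
  (differentiableAt_const _).prodMk differentiableAt_id
/-! ### Numerical peak computations -/

lemma abs_eq_of_normSq {x : ℂ} {r : ℝ} (hr : 0 ≤ r) (h : Complex.normSq x = r^2) :
    Complex.abs x = r := by
  rw [Complex.abs_apply, h, Real.sqrt_sq hr]

lemma abs_ofReal_nonneg {q : ℝ} (hq : 0 ≤ q) : Complex.abs ((q : ℝ) : ℂ) = q := by
  rw [Complex.abs_ofReal, _root_.abs_of_nonneg hq]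

/-- Peak values for `uh₁ = (3/2, 0)` at `ω = ±i`. -/
lemma peak1 (ω : ℂ) (hω : ω = Complex.I ∨ ω = -Complex.I) :
    Complex.abs (Qf ((3/2 : ℂ), (0 : ℂ)) ω) = 15/16 := by
  have hsq : ω^2 = -1 := by
    rcases hω with h | h <;> rw [h]
    · exact Complex.I_sq
    · rw [neg_pow, Complex.I_sq]; norm_num
  have hval : Qf ((3/2 : ℂ), (0 : ℂ)) ω = -(((15/16 : ℝ) : ℂ)) := by
    rw [Qf]
    push_cast
    linear_combination (3/16 : ℂ) * hsq
  rw [hval, map_neg_eq_map, abs_ofReal_nonneg (by norm_num)]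

/-- Peak values for `uh₂ = (0, 15/16)` at `ω = ±i`. -/
lemma peak2 (ω : ℂ) (hω : Complex.abs ω = 1) :
    Complex.abs (Qf ((0 : ℂ), (15/16 : ℂ)) ω) = 15/16 := by
  have hval : Qf ((0 : ℂ), (15/16 : ℂ)) ω = ω * ((15/16 : ℝ) : ℂ) := by
    rw [Qf]; push_cast; ring
  rw [hval, map_mul, hω, one_mul, abs_ofReal_nonneg (by norm_num)]

/-- The peak points for `uh₃`. -/
def sq7 : ℝ := Real.sqrt 7

lemma sq7_sq : (sq7 : ℝ)^2 = 7 := Real.sq_sqrt (by norm_num)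

lemma sq7_pos : 0 < sq7 := Real.sqrt_pos.mpr (by norm_num)

def om3p : ℂ := ((-9/16 : ℝ) : ℂ) + ((5*sq7/16 : ℝ) : ℂ) * Complex.I

def om3m : ℂ := ((-9/16 : ℝ) : ℂ) + ((-(5*sq7)/16 : ℝ) : ℂ) * Complex.I

lemma sq7_sq_c : ((sq7 : ℝ) : ℂ)^2 = 7 := by
  exact_mod_cast sq7_sq

lemma om3p_abs : Complex.abs om3p = 1 := by
  apply abs_eq_of_normSq (by norm_num)
  rw [om3p, Complex.normSq_add_mul_I]
  have := sq7_sq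
  nlinarith [this]

lemma om3m_abs : Complex.abs om3m = 1 := by
  apply abs_eq_of_normSq (by norm_num)
  rw [om3m, Complex.normSq_add_mul_I]
  have := sq7_sq
  nlinarith [this]

lemma om3_ne : om3p ≠ om3m := by
  intro h
  have h1 : (om3p).im = (om3m).im := by rw [h]
  rw [om3p, om3m] at h1
  simp only [Complex.add_im, Complex.ofReal_im, Complex.mul_im, Complex.ofReal_re,
    Complex.I_im, Complex.I_re, mul_zero, mul_one, zero_add] at h1
  have := sq7_pos
  nlinarith [h1]

lemma peak3p : Complex.abs (Qf ((6/5 : ℂ), (9/20 : ℂ)) om3p) = 15/16 := by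
  have hval : Qf ((6/5 : ℂ), (9/20 : ℂ)) om3p
      = ((-465/512 : ℝ) : ℂ) + ((45*sq7/512 : ℝ) : ℂ) * Complex.I := by
    rw [Qf, om3p]
    push_cast
    linear_combination (15*(((sq7 : ℝ) : ℂ))^2/1024) * Complex.I_sq + (-(15:ℂ)/1024) * sq7_sq_c
  apply abs_eq_of_normSq (by norm_num)
  rw [hval]
  rw [Complex.normSq_add_mul_I]
  have := sq7_sq
  nlinarith [this]

lemma peak3m : Complex.abs (Qf ((6/5 : ℂ), (9/20 : ℂ)) om3m) = 15/16 := by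
  have hval : Qf ((6/5 : ℂ), (9/20 : ℂ)) om3m
      = ((-465/512 : ℝ) : ℂ) + ((-(45*sq7)/512 : ℝ) : ℂ) * Complex.I := by
    rw [Qf, om3m]
    push_cast
    linear_combination (15*(((sq7 : ℝ) : ℂ))^2/1024) * Complex.I_sq + (-(15:ℂ)/1024) * sq7_sq_c
  apply abs_eq_of_normSq (by norm_num)
  rw [hval]
  rw [Complex.normSq_add_mul_I]
  have := sq7_sq
  nlinarith [this]

/-! ### Values of `Φ` and its derivative at the two base points -/

lemma Phi_z0 (ω : ℂ) : Phi ω ((0:ℂ), (0:ℂ)) = 0 := by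
  rw [Phi]; simp

lemma Phi_w0_abs {ω : ℂ} (hω : Complex.abs ω = 1) :
    Complex.abs (Phi ω ((0:ℂ), (1/4:ℂ))) = 1/4 := by
  have hval : Phi ω ((0:ℂ), (1/4:ℂ)) = ω * ((1/4 : ℝ) : ℂ) := by
    rw [Phi]
    push_cast
    norm_num
    ring
  rw [hval, map_mul, hω, one_mul, abs_ofReal_nonneg (by norm_num)]

lemma phiD_w0 (ω : ℂ) (v : ℂ × ℂ) : phiD ω ((0:ℂ), (1/4:ℂ)) v = Qf v ω := by
  rw [phiD_apply, Qf]
  simp only [mul_zero, sub_zero]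
  field_simp
  ring

lemma phiD_z0 (ω : ℂ) (v : ℂ × ℂ) : phiD ω ((0:ℂ), (0:ℂ)) v = Q0 v ω := by
  rw [phiD_apply, Q0]
  simp only [mul_zero, sub_zero]
  field_simp
  ring

lemma mem_ball_iff_abs {t : ℂ} : t ∈ ball (0:ℂ) 1 ↔ Complex.abs t < 1 := by
  simp [Complex.dist_eq]

/-! ### Pigeonhole on the axes -/

lemma det_zero_of_axis (L M : (ℂ × ℂ) →L[ℂ] (ℂ × ℂ)) (hLM : ∀ x, L (M x) = x)
    {u1 u2 : ℂ × ℂ}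
    (h : ((M u1).1 = 0 ∧ (M u2).1 = 0) ∨ ((M u1).2 = 0 ∧ (M u2).2 = 0)) :
    u1.1 * u2.2 - u1.2 * u2.1 = 0 := by
  rcases h with ⟨h1, h2⟩ | ⟨h1, h2⟩
  · have e1 : u1 = (M u1).2 • L ((0:ℂ),(1:ℂ)) := by
      conv_lhs => rw [← hLM u1, vec_split (M u1)]
      rw [map_add, map_smul, map_smul, h1]
      simp
    have e2 : u2 = (M u2).2 • L ((0:ℂ),(1:ℂ)) := by
      conv_lhs => rw [← hLM u2, vec_split (M u2)]
      rw [map_add, map_smul, map_smul, h2]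
      simp
    rw [e1, e2]
    simp only [Prod.smul_fst, Prod.smul_snd, smul_eq_mul]
    ring
  · have e1 : u1 = (M u1).1 • L ((1:ℂ),(0:ℂ)) := by
      conv_lhs => rw [← hLM u1, vec_split (M u1)]
      rw [map_add, map_smul, map_smul, h1]
      simp
    have e2 : u2 = (M u2).1 • L ((1:ℂ),(0:ℂ)) := by
      conv_lhs => rw [← hLM u2, vec_split (M u2)]
      rw [map_add, map_smul, map_smul, h2]
      simp
    rw [e1, e2]
    simp only [Prod.smul_fst, Prod.smul_snd, smul_eq_mul]
    ring
end AutG2Proof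

open AutG2Proof Metric in
/-- `Aut(G₂)` does not act transitively on `G₂`; the symmetrized bidisc
is inhomogeneous. -/
theorem aut_G2_not_transitive :
    ∃ z ∈ G2, ∃ w ∈ G2,
      ∀ F : ℂ × ℂ → ℂ × ℂ, IsAutomorphismOf G2 F → F z ≠ w := by
  have habs14 : Complex.abs ((1/4 : ℂ)) < 1 := by
    rw [show ((1/4 : ℂ)) = (((1/4 : ℝ)) : ℂ) by norm_num, Complex.abs_ofReal]
    rw [abs_of_nonneg (by norm_num : (0:ℝ) ≤ 1/4)]
    norm_num
  have hz0mem : ((0:ℂ), (0:ℂ)) ∈ G2 := by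
    refine ⟨0, ?_, 0, ?_, ?_⟩
    · rw [mem_unitDisc]; simp
    · rw [mem_unitDisc]; simp
    · rw [symPi]; norm_num
  have hw0mem : ((0:ℂ), (1/4:ℂ)) ∈ G2 := mem_G2_zero_fst habs14
  refine ⟨((0:ℂ), (0:ℂ)), hz0mem, ((0:ℂ), (1/4:ℂ)), hw0mem, ?_⟩
  rintro F ⟨hdF, hmF, G, hdG, hmG, hinv⟩ heq
  have hFd : DifferentiableAt ℂ F ((0:ℂ), (0:ℂ)) :=
    hdF.differentiableAt (isOpen_G2.mem_nhds hz0mem)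
  have hGd : DifferentiableAt ℂ G ((0:ℂ), (1/4:ℂ)) :=
    hdG.differentiableAt (isOpen_G2.mem_nhds hw0mem)
  have hGw0 : G ((0:ℂ), (1/4:ℂ)) = ((0:ℂ), (0:ℂ)) := by
    rw [← heq]; exact hinv.1 hz0mem
  obtain ⟨L, hFh⟩ : ∃ L', HasFDerivAt F L' ((0:ℂ), (0:ℂ)) := ⟨_, hFd.hasFDerivAt⟩
  obtain ⟨M, hGh⟩ : ∃ M', HasFDerivAt G M' ((0:ℂ), (1/4:ℂ)) := ⟨_, hGd.hasFDerivAt⟩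
  have hfdF : fderiv ℂ F ((0:ℂ), (0:ℂ)) = L := hFh.fderiv
  have hfdG : fderiv ℂ G ((0:ℂ), (1/4:ℂ)) = M := hGh.fderiv
  -- `M` and `L` are inverse to each other
  have hGh' : HasFDerivAt G M (F ((0:ℂ), (0:ℂ))) := by rw [heq]; exact hGh
  have hFh' : HasFDerivAt F L (G ((0:ℂ), (1/4:ℂ))) := by rw [hGw0]; exact hFh
  have hGFh : HasFDerivAt (G ∘ F) (M.comp L) ((0:ℂ), (0:ℂ)) :=
    hGh'.comp _ hFh
  have hFGh : HasFDerivAt (F ∘ G) (L.comp M) ((0:ℂ), (1/4:ℂ)) :=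
    hFh'.comp _ hGh
  have hev1 : (G ∘ F) =ᶠ[nhds ((0:ℂ), (0:ℂ))] id :=
    Filter.eventuallyEq_of_mem (isOpen_G2.mem_nhds hz0mem) (fun x hx => hinv.1 hx)
  have hev2 : (F ∘ G) =ᶠ[nhds ((0:ℂ), (1/4:ℂ))] id :=
    Filter.eventuallyEq_of_mem (isOpen_G2.mem_nhds hw0mem) (fun x hx => hinv.2 hx)
  have hid1 : HasFDerivAt (G ∘ F) (ContinuousLinearMap.id ℂ (ℂ × ℂ)) ((0:ℂ), (0:ℂ)) :=
    (hasFDerivAt_id _).congr_of_eventuallyEq hev1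
  have hid2 : HasFDerivAt (F ∘ G) (ContinuousLinearMap.id ℂ (ℂ × ℂ)) ((0:ℂ), (1/4:ℂ)) :=
    (hasFDerivAt_id _).congr_of_eventuallyEq hev2
  have hML0 := hGFh.unique hid1
  have hLM0 := hFGh.unique hid2
  have hML : ∀ x, M (L x) = x := by
    intro x
    have := DFunLike.congr_fun hML0 x
    simpa using this
  have hLM : ∀ x, L (M x) = x := by
    intro x
    have := DFunLike.congr_fun hLM0 x
    simpa using this
  -- Upper bounds for `L` on the axes
  have hS₁ : ∀ ω : ℂ, Complex.abs ω = 1 →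
      Complex.abs (Qf (L ((1:ℂ),(0:ℂ))) ω) ≤ 15/32 := by
    intro ω hω
    have h := composite_SP hdF hmF (χ := chi1)
      (fun t _ => chi1_diffAt t) (fun t ht => chi1_mem (mem_ball_iff_abs.mp ht))
      chi1_hasDerivAt hω
    rw [chi1_zero, heq, hfdF, phiD_w0, Phi_w0_abs hω] at h
    have h2 : ((2:ℂ), (0:ℂ)) = (2:ℂ) • ((1:ℂ), (0:ℂ)) := by
      rw [Prod.smul_mk]; norm_num
    rw [h2, map_smul, Qf_smul, map_mul, Complex.abs_two] at h
    norm_num at h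
    simp only [Complex.abs_eq_norm']; linarith
  have hS₂ : ∀ ω : ℂ, Complex.abs ω = 1 →
      Complex.abs (Qf (L ((0:ℂ),(1:ℂ))) ω) ≤ 15/16 := by
    intro ω hω
    have h := composite_SP hdF hmF (χ := chi2)
      (fun t _ => chi2_diffAt t) (fun t ht => chi2_mem (mem_ball_iff_abs.mp ht))
      chi2_hasDerivAt hω
    rw [show chi2 0 = ((0:ℂ), (0:ℂ)) from rfl, heq, hfdF, phiD_w0, Phi_w0_abs hω] at h
    norm_num at h
    exact h
  -- The Schwarz–Pick bound at the origin along a disc through `w₀`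
  have hC2 : ∀ (ψ : ℂ → ℂ × ℂ) (u : ℂ × ℂ),
      (∀ t, Complex.abs t < 1 → DifferentiableAt ℂ ψ t) →
      (∀ t, Complex.abs t < 1 → ψ t ∈ G2) →
      HasDerivAt ψ u 0 → ψ 0 = ((0:ℂ),(1/4:ℂ)) →
      Nn (M u) ≤ 1 := by
    intro ψ u hdψ hmψ hdu hψ0
    apply N_le_of
    intro ω hω
    have h := composite_SP hdG hmG (χ := ψ)
      (fun t ht => hdψ t (mem_ball_iff_abs.mp ht))
      (fun t ht => hmψ t (mem_ball_iff_abs.mp ht)) hdu hω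
    rw [hψ0, hGw0, hfdG, phiD_z0, Phi_z0] at h
    simpa using h
  -- the three extremal directions
  have hIne : Complex.I ≠ -Complex.I := by
    intro h
    apply Complex.I_ne_zero
    linear_combination (1/2 : ℂ) * h
  have habsI : Complex.abs Complex.I = 1 := Complex.abs_I
  have habsnegI : Complex.abs (-Complex.I) = 1 := by
    rw [map_neg_eq_map]; exact Complex.abs_I
  -- direction 1 : uh₁ = (3/2, 0) via ψ_{e=1}
  have he1 : Complex.abs (1 : ℂ) = 1 := by simp
  have hD1 : HasDerivAt (psiE 1) ((3/2:ℂ), (0:ℂ)) 0 := by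
    have h := psiE_hasDerivAt 1
    have e : ((3/4) * ((1:ℂ) + (starRingEnd ℂ) (1:ℂ)),
        (3/4) * (Complex.I/2) * ((starRingEnd ℂ) (1:ℂ) - 1)) = ((3/2:ℂ), (0:ℂ)) := by
      rw [map_one]
      simp only [Prod.mk.injEq]
      constructor <;> ring_nf <;> norm_num
    rwa [e] at h
  have hN1 : Nn (M ((3/2:ℂ), (0:ℂ))) ≤ 1 :=
    hC2 (psiE 1) _ (fun t ht => psiE_diffAt he1 ht) (fun t ht => psiE_mem he1 ht)
      hD1 (psiE_zero 1)
  have ax1 := axis_of L M hML hLM hS₁ hS₂ ((3/2:ℂ), (0:ℂ)) Complex.I (-Complex.I)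
    habsI habsnegI hIne (peak1 _ (Or.inl rfl)) (peak1 _ (Or.inr rfl)) hN1
  -- direction 2 : uh₂ = (0, 15/16) via ψ₂
  have hN2 : Nn (M ((0:ℂ), (15/16:ℂ))) ≤ 1 :=
    hC2 psi2 _ (fun t ht => psi2_diffAt ht) (fun t ht => psi2_mem ht)
      psi2_hasDerivAt psi2_zero
  have ax2 := axis_of L M hML hLM hS₁ hS₂ ((0:ℂ), (15/16:ℂ)) Complex.I (-Complex.I)
    habsI habsnegI hIne (peak2 _ habsI) (peak2 _ habsnegI) hN2
  -- direction 3 : uh₃ = (6/5, 9/20) via ψ_{e₃}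
  have he3 : Complex.abs (((4/5:ℝ):ℂ) + ((3/5:ℝ):ℂ) * Complex.I) = 1 := by
    apply abs_eq_of_normSq (by norm_num)
    rw [Complex.normSq_add_mul_I]
    norm_num
  have hconj3 : (starRingEnd ℂ) (((4/5:ℝ):ℂ) + ((3/5:ℝ):ℂ) * Complex.I)
      = ((4/5:ℝ):ℂ) - ((3/5:ℝ):ℂ) * Complex.I := by
    rw [map_add, map_mul, Complex.conj_ofReal, Complex.conj_ofReal, Complex.conj_I]
    ring
  have hD3 : HasDerivAt (psiE (((4/5:ℝ):ℂ) + ((3/5:ℝ):ℂ) * Complex.I))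
      ((6/5:ℂ), (9/20:ℂ)) 0 := by
    have h := psiE_hasDerivAt (((4/5:ℝ):ℂ) + ((3/5:ℝ):ℂ) * Complex.I)
    rw [hconj3] at h
    have e : ((3/4) * ((((4/5:ℝ):ℂ) + ((3/5:ℝ):ℂ) * Complex.I)
          + (((4/5:ℝ):ℂ) - ((3/5:ℝ):ℂ) * Complex.I)),
        (3/4) * (Complex.I/2) * ((((4/5:ℝ):ℂ) - ((3/5:ℝ):ℂ) * Complex.I)
          - (((4/5:ℝ):ℂ) + ((3/5:ℝ):ℂ) * Complex.I))) = ((6/5:ℂ), (9/20:ℂ)) := by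
      simp only [Prod.mk.injEq]
      constructor
      · push_cast; ring
      · push_cast
        linear_combination (-(9:ℂ)/20) * Complex.I_sq
    rwa [e] at h
  have hN3 : Nn (M ((6/5:ℂ), (9/20:ℂ))) ≤ 1 :=
    hC2 (psiE (((4/5:ℝ):ℂ) + ((3/5:ℝ):ℂ) * Complex.I)) _
      (fun t ht => psiE_diffAt he3 ht) (fun t ht => psiE_mem he3 ht)
      hD3 (psiE_zero _)
  have ax3 := axis_of L M hML hLM hS₁ hS₂ ((6/5:ℂ), (9/20:ℂ)) om3p om3m
    om3p_abs om3m_abs om3_ne peak3p peak3m hN3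
  -- pigeonhole: two of the three directions lie on a common axis
  obtain ⟨hax1, -⟩ := ax1
  obtain ⟨hax2, -⟩ := ax2
  obtain ⟨hax3, -⟩ := ax3
  rcases hax1 with a1 | a1 <;> rcases hax2 with a2 | a2
  · have := det_zero_of_axis L M hLM (Or.inl ⟨a1, a2⟩)
    norm_num at this
  · rcases hax3 with a3 | a3
    · have := det_zero_of_axis L M hLM (Or.inl ⟨a1, a3⟩)
      norm_num at this
    · have := det_zero_of_axis L M hLM (Or.inr ⟨a2, a3⟩)
      norm_num at this
  · rcases hax3 with a3 | a3
    · have := det_zero_of_axis L M hLM (Or.inl ⟨a2, a3⟩)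
      norm_num at this
    · have := det_zero_of_axis L M hLM (Or.inr ⟨a1, a3⟩)
      norm_num at this
  · have := det_zero_of_axis L M hLM (Or.inr ⟨a1, a2⟩)
    norm_num at this
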